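/- arXiv:cs/0405100 — 4 statements merged into one kernel-verified Lean document; each statement's English description precedes it below -/
import Mathlib

section
/- For all types τ and σ and any parameter α, Max(τ[σ/α]) = Max(τ)[Max(σ)/α], i.e., the maximum-supertype operation commutes with substitution of a single parameter. -/
structure Sig (K : Type) where
  ar : K → ℕ
  le : K → K → Prop
  le_refl : ∀ k, le k k
  le_trans : ∀ {a b c}, le a b → le b c → le a c
  le_antisymm : ∀ {a b}, le a b → le b a → a = b
  ar_anti : ∀ {a b}, le a b → ar b ≤ ar a
  iota : K → K → ℕ → ℕ
  iota_lt : ∀ {a b}, le a b → ∀ {i}, i < ar b → iota a b i < ar a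
  iota_inj : ∀ {a b}, le a b → ∀ {i j}, i < ar b → j < ar b → iota a b i = iota a b j → i = j
  iota_id : ∀ k i, iota k k i = i
  iota_comp : ∀ {a b c}, le a b → le b c → ∀ {i}, i < ar c → iota a c i = iota a b (iota b c i)

/-- Types: first-order terms over constructors `K` and parameters (type variables) `ℕ`. -/
inductive Ty (K : Type) : Type
  | param : ℕ → Ty K
  | con : K → List (Ty K) → Ty K

/-- The structural covariant subtyping order. -/
inductive SubTy {K : Type} (S : Sig K) : Ty K → Ty K → Prop
  | param (n : ℕ) : SubTy S (.param n) (.param n)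
  | con {k k' : K} {as as' : List (Ty K)} :
      S.le k k' → as.length = S.ar k → as'.length = S.ar k' →
      (∀ i, i < S.ar k' → SubTy S (as.getD (S.iota k k' i) (.param 0)) (as'.getD i (.param 0))) →
      SubTy S (.con k as) (.con k' as')

/-- Application of a type substitution. -/
def Ty.subst {K : Type} (θ : ℕ → Ty K) : Ty K → Ty K
  | .param n => θ n
  | .con k as => .con k (as.attach.map (fun a => a.1.subst θ))
decreasing_by simp_wf; have := List.sizeOf_lt_of_mem a.2; omega

/-- Number of occurrences of constructors and parameters. -/
def Ty.size {K : Type} : Ty K → ℕ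
  | .param _ => 1
  | .con _ as => 1 + (as.attach.map (fun a => a.1.size)).sum
decreasing_by simp_wf; have := List.sizeOf_lt_of_mem a.2; omega

/-- The parameter α occurs in a type. -/
inductive Occurs {K : Type} (α : ℕ) : Ty K → Prop
  | param : Occurs α (.param α)
  | con {k : K} {as : List (Ty K)} {t : Ty K} : t ∈ as → Occurs α t → Occurs α (.con k as)

/-- `m` is the maximum of the set of supertypes of `t`. -/
def IsMaxTy {K : Type} (S : Sig K) (t m : Ty K) : Prop :=
  SubTy S t m ∧ ∀ s, SubTy S t s → SubTy S s m

/-- Substitution of a single parameter: `t[σ/α]`. -/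
def Ty.subst1 {K : Type} (α : ℕ) (σ : Ty K) (t : Ty K) : Ty K :=
  t.subst (fun n => if n = α then σ else .param n)

namespace MaxSubstAux

variable {K : Type} {S : Sig K}

theorem subTy_param_inv {n : ℕ} {s : Ty K} (h : SubTy S (.param n) s) : s = .param n := by
  cases h; rfl

theorem isMax_param (n : ℕ) : IsMaxTy S (.param n) (.param n) :=
  ⟨.param n, fun s hs => by rw [subTy_param_inv hs]; exact .param n⟩

theorem subst_con (θ : ℕ → Ty K) (k : K) (as : List (Ty K)) :
    Ty.subst θ (.con k as) = .con k (as.map (Ty.subst θ)) := by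
  rw [Ty.subst]
  exact congrArg _ (List.attach_map_val (l := as) (f := Ty.subst θ))

theorem subst1_con (α : ℕ) (σ : Ty K) (k : K) (as : List (Ty K)) :
    Ty.subst1 α σ (.con k as) = .con k (as.map (Ty.subst1 α σ)) :=
  subst_con _ k as

theorem subst1_param (α n : ℕ) (σ : Ty K) :
    Ty.subst1 α σ (.param n) = if n = α then σ else .param n := by
  rw [Ty.subst1, Ty.subst]

theorem getD_map_of_lt (f : Ty K → Ty K) (l : List (Ty K)) {i : ℕ} (h : i < l.length) :
    (l.map f).getD i (.param 0) = f (l.getD i (.param 0)) := by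
  rw [List.getD_eq_getElem _ _ (by simpa using h), List.getElem_map,
    List.getD_eq_getElem _ _ h]

theorem getD_ofFn {n : ℕ} (f : Fin n → Ty K) {i : ℕ} (h : i < n) :
    (List.ofFn f).getD i (.param 0) = f ⟨i, h⟩ := by
  rw [List.getD_eq_getElem _ _ (by simpa using h)]
  simp

theorem getD_set_of_lt (l : List (Ty K)) (i j : ℕ) (a : Ty K) (h : j < l.length) :
    (l.set i a).getD j (.param 0) = if i = j then a else l.getD j (.param 0) := by
  rw [List.getD_eq_getElem _ _ (by simpa using h), List.getElem_set]
  split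
  · rfl
  · rw [List.getD_eq_getElem _ _ h]

/-- Backward characterization: building a maximum for a `con` type. -/
theorem isMax_con {k ktop : K} {as ms : List (Ty K)}
    (hk : S.le k ktop) (hktop : ∀ k'', S.le k k'' → S.le k'' ktop)
    (hlen : as.length = S.ar k) (hmlen : ms.length = S.ar ktop)
    (hargs : ∀ i, i < S.ar ktop →
      IsMaxTy S (as.getD (S.iota k ktop i) (.param 0)) (ms.getD i (.param 0))) :
    IsMaxTy S (.con k as) (.con ktop ms) := by
  constructor
  · exact .con hk hlen hmlen (fun i hi => (hargs i hi).1)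
  · intro s hs
    cases hs with
    | @con _ k1 _ as1 hk1 hlenA hlen1 hargs1 =>
      have hk1t : S.le k1 ktop := hktop _ hk1
      refine .con hk1t hlen1 hmlen (fun i hi => ?_)
      apply (hargs i hi).2
      have hj : S.iota k1 ktop i < S.ar k1 := S.iota_lt hk1t hi
      have := hargs1 _ hj
      rwa [← S.iota_comp hk1 hk1t hi] at this

/-- Forward characterization: inverting a maximum of a `con` type. -/
theorem isMax_con_inv {k ktop : K} {as : List (Ty K)} {m : Ty K}
    (hk : S.le k ktop) (hktop : ∀ k'', S.le k k'' → S.le k'' ktop)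
    (h : IsMaxTy S (.con k as) m) :
    ∃ ms : List (Ty K), m = .con ktop ms ∧ as.length = S.ar k ∧ ms.length = S.ar ktop ∧
      ∀ i, i < S.ar ktop →
        IsMaxTy S (as.getD (S.iota k ktop i) (.param 0)) (ms.getD i (.param 0)) := by
  obtain ⟨h1, h2⟩ := h
  cases h1 with
  | @con _ k1 _ as1 hk1 hlen hlen1 hargs =>
    have hk1t : S.le k1 ktop := hktop _ hk1
    -- first show k1 = ktop by exhibiting a supertype with head ktop
    have hktopeq : k1 = ktop := by
      have hsub : SubTy S (.con k as)
          (.con ktop (List.ofFn (n := S.ar ktop)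
            (fun i => as1.getD (S.iota k1 ktop i.1) (.param 0)))) := by
        refine .con hk hlen (by simp) (fun i hi => ?_)
        rw [getD_ofFn _ hi]
        have hj : S.iota k1 ktop i < S.ar k1 := S.iota_lt hk1t hi
        have := hargs _ hj
        rwa [← S.iota_comp hk1 hk1t hi] at this
      have := h2 _ hsub
      cases this with
      | con hle _ _ _ => exact S.le_antisymm (hktop _ hk1) hle
    subst hktopeq
    refine ⟨as1, rfl, hlen, hlen1, fun i hi => ?_⟩
    refine ⟨hargs i hi, fun s hs => ?_⟩
    have hilen : i < as1.length := by omega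
    -- build the supertype where the i-th argument is replaced by s
    have hsub : SubTy S (.con k as) (.con k1 (as1.set i s)) := by
      refine .con hk hlen (by simpa using hlen1) (fun j hj => ?_)
      have hjlen : j < as1.length := by omega
      rw [getD_set_of_lt _ _ _ _ hjlen]
      by_cases hij : i = j
      · subst hij
        simpa using hs
      · simp only [hij, if_false]
        exact hargs j hj
    have := h2 _ hsub
    cases this with
    | con _ _ _ hargs2 =>
      have := hargs2 i hi
      rw [S.iota_id, getD_set_of_lt _ _ _ _ hilen, if_pos rfl] at this
      exact this

theorem key (S : Sig K)
    (htop : ∀ k : K, ∃ k', S.le k k' ∧ ∀ k'', S.le k k'' → S.le k'' k')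
    (α : ℕ) (σ mσ : Ty K) (hmσ : IsMaxTy S σ mσ) :
    ∀ (τ mτ : Ty K), IsMaxTy S τ mτ →
      IsMaxTy S (Ty.subst1 α σ τ) (Ty.subst1 α mσ mτ)
  | .param n, mτ, h => by
      have := subTy_param_inv h.1
      subst this
      rw [subst1_param, subst1_param]
      split
      · exact hmσ
      · exact isMax_param n
  | .con k as, mτ, h => by
      obtain ⟨ktop, hk, hktop⟩ := htop k
      obtain ⟨ms, rfl, hlen, hmlen, hargs⟩ := isMax_con_inv hk hktop h
      rw [subst1_con, subst1_con]
      refine isMax_con hk hktop (by simpa using hlen) (by simpa using hmlen)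
        (fun i hi => ?_)
      have hj : S.iota k ktop i < S.ar k := S.iota_lt hk hi
      have hjlen : S.iota k ktop i < as.length := by omega
      have hilen : i < ms.length := by omega
      rw [getD_map_of_lt _ _ hjlen, getD_map_of_lt _ _ hilen]
      exact key S htop α σ mσ hmσ _ _ (hargs i hi)
  termination_by τ => sizeOf τ
  decreasing_by
    have h1 : as.getD (S.iota k ktop i) (.param 0) ∈ as := by
      rw [List.getD_eq_getElem _ _ hjlen]
      exact List.getElem_mem _
    have := List.sizeOf_lt_of_mem h1
    simp only [Ty.con.sizeOf_spec]
    omega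

end MaxSubstAux

/-- Max(τ[σ/α]) = Max(τ)[Max(σ)/α]. -/
theorem max_subst1 {K : Type} (S : Sig K)
    (htop : ∀ k : K, ∃ k', S.le k k' ∧ ∀ k'', S.le k k'' → S.le k'' k')
    (τ σ : Ty K) (α : ℕ) (mτ mσ : Ty K)
    (hmτ : IsMaxTy S τ mτ) (hmσ : IsMaxTy S σ mσ) :
    IsMaxTy S (Ty.subst1 α σ τ) (Ty.subst1 α mσ mτ) :=
  MaxSubstAux.key S htop α σ mσ hmσ τ mτ hmτ
end

section
/- A subtype inequality of the form τ[α] ≤ α, where τ strictly contains the parameter α, has no solution if α occurs in Max(τ), i.e., if α ∈ vars(Max(τ)) then there is no type σ with τ[σ/α] ≤ σ. -/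
----------------------------------------------------------------------
-- auxiliary lemmas
----------------------------------------------------------------------

lemma NS_subst_con {K : Type} (θ : ℕ → Ty K) (k : K) (as : List (Ty K)) :
    Ty.subst θ (.con k as) = .con k (as.map (Ty.subst θ)) := by
  rw [Ty.subst]; simp [List.attach_map_val]

lemma NS_subst1_con {K : Type} (α : ℕ) (σ : Ty K) (k : K) (as : List (Ty K)) :
    Ty.subst1 α σ (.con k as) = .con k (as.map (Ty.subst1 α σ)) := by
  simp [Ty.subst1, NS_subst_con]

lemma NS_subst1_param {K : Type} (α : ℕ) (σ : Ty K) (n : ℕ) :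
    Ty.subst1 α σ (.param n) = if n = α then σ else .param n := by
  rw [Ty.subst1, Ty.subst]

lemma NS_size_con {K : Type} (k : K) (as : List (Ty K)) :
    Ty.size (Ty.con k as) = 1 + (as.map Ty.size).sum := by
  rw [Ty.size]; simp [List.attach_map_val]

lemma NS_sizeOf_getD_lt {K : Type} (as : List (Ty K)) (j : ℕ) (k : K) :
    sizeOf (as.getD j (Ty.param 0)) < sizeOf (Ty.con k as) := by
  rcases Nat.lt_or_ge j as.length with h | h
  · rw [List.getD_eq_getElem _ _ h]
    have := List.sizeOf_lt_of_mem (as.getElem_mem h)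
    simp only [Ty.con.sizeOf_spec]
    omega
  · rw [List.getD_eq_default _ _ h]
    have : 1 ≤ sizeOf as := by cases as <;> simp <;> omega
    simp only [Ty.con.sizeOf_spec, Ty.param.sizeOf_spec, sizeOf_nat]
    omega

lemma NS_range_map_getD {α : Type*} (f : ℕ → α) {n i : ℕ} (h : i < n) (d : α) :
    ((List.range n).map f).getD i d = f i := by
  rw [List.getD_eq_getElem _ _ (by simpa using h)]
  simp

def maxTy {K : Type} (S : Sig K) (top : K → K) : Ty K → Ty K
  | .param n => .param n
  | .con k as => .con (top k) ((List.range (S.ar (top k))).map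
      fun i => maxTy S top (as.getD (S.iota k (top k) i) (.param 0)))
termination_by t => sizeOf t
decreasing_by exact NS_sizeOf_getD_lt as _ k

lemma NS_maxTy_con {K : Type} (S : Sig K) (top : K → K) (k : K) (as : List (Ty K)) :
    maxTy S top (.con k as) = .con (top k) ((List.range (S.ar (top k))).map
      fun i => maxTy S top (as.getD (S.iota k (top k) i) (.param 0))) := by
  rw [maxTy]

lemma NS_top_eq {K : Type} (S : Sig K) (top : K → K)
    (h1 : ∀ k, S.le k (top k)) (h2 : ∀ k k'', S.le k k'' → S.le k'' (top k))
    {k k' : K} (h : S.le k k') : top k = top k' := by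
  have a : S.le k (top k') := S.le_trans h (h1 k')
  have b : S.le (top k') (top k) := h2 k _ a
  have c : S.le k' (top k) := S.le_trans (h1 k') b
  exact S.le_antisymm (h2 k' _ c) b

lemma NS_maxTy_spec {K : Type} (S : Sig K) (top : K → K)
    (h1 : ∀ k, S.le k (top k)) (h2 : ∀ k k'', S.le k k'' → S.le k'' (top k))
    {t s : Ty K} (h : SubTy S t s) :
    SubTy S t (maxTy S top t) ∧ SubTy S s (maxTy S top s) ∧ maxTy S top t = maxTy S top s := by
  induction h with
  | param n =>
    have hp : maxTy S top (Ty.param n) = Ty.param n := by rw [maxTy]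
    rw [hp]
    exact ⟨.param n, .param n, rfl⟩
  | @con k k' as as' hle hl hl' hargs ih =>
    have hk'T : S.le k' (top k) := h2 k k' hle
    have hTeq : top k = top k' := NS_top_eq S top h1 h2 hle
    refine ⟨?_, ?_, ?_⟩
    · rw [NS_maxTy_con]
      refine SubTy.con (h1 k) hl (by simp) ?_
      intro i hi
      rw [NS_range_map_getD _ hi]
      have hj : S.iota k' (top k) i < S.ar k' := S.iota_lt hk'T hi
      have hcomp : S.iota k (top k) i = S.iota k k' (S.iota k' (top k) i) :=
        S.iota_comp hle hk'T hi
      rw [hcomp]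
      exact (ih _ hj).1
    · rw [NS_maxTy_con]
      refine SubTy.con (h1 k') hl' (by simp) ?_
      intro i hi
      rw [NS_range_map_getD _ hi]
      have hj : S.iota k' (top k') i < S.ar k' := S.iota_lt (h1 k') hi
      exact (ih _ hj).2.1
    · rw [NS_maxTy_con, NS_maxTy_con, hTeq]
      congr 1
      apply List.map_congr_left
      intro i hi
      rw [List.mem_range] at hi
      have hk'T' : S.le k' (top k') := h1 k'
      have hj : S.iota k' (top k') i < S.ar k' := S.iota_lt hk'T' hi
      have hcomp : S.iota k (top k') i = S.iota k k' (S.iota k' (top k') i) :=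
        S.iota_comp hle hk'T' hi
      rw [hcomp]
      exact (ih _ hj).2.2

lemma NS_subty_antisymm {K : Type} (S : Sig K) {t s : Ty K}
    (h : SubTy S t s) (h' : SubTy S s t) : t = s := by
  induction h with
  | param n => rfl
  | @con k k' as as' hle hl hl' hargs ih =>
    cases h' with
    | con hle2 hl2 hl2' hargs2 =>
      have hk : k = k' := S.le_antisymm hle hle2
      subst hk
      congr 1
      apply List.ext_getElem (by omega)
      intro i hi1 hi2
      have hik : i < S.ar k := by omega
      have e := ih i hik (by simpa [S.iota_id] using hargs2 i hik)
      rw [S.iota_id] at e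
      rw [List.getD_eq_getElem _ _ hi1, List.getD_eq_getElem _ _ hi2] at e
      exact e

lemma NS_maxTy_param {K : Type} (S : Sig K) (top : K → K) (n : ℕ) :
    maxTy S top (.param n) = .param n := by rw [maxTy]

theorem NS_key {K : Type} (S : Sig K) (top : K → K)
    (h1 : ∀ k, S.le k (top k)) (h2 : ∀ k k'', S.le k k'' → S.le k'' (top k))
    (α : ℕ) (σ : Ty K) :
    ∀ (t s : Ty K), SubTy S (Ty.subst1 α σ t) s →
      maxTy S top s = Ty.subst1 α (maxTy S top σ) (maxTy S top t)
  | .param n, s, h => by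
    rw [NS_subst1_param] at h
    by_cases hn : n = α
    · rw [if_pos hn] at h
      have hms := (NS_maxTy_spec S top h1 h2 h).2.2
      rw [← hms, NS_maxTy_param, NS_subst1_param, if_pos hn]
    · rw [if_neg hn] at h
      cases h
      simp [NS_maxTy_param, NS_subst1_param, hn]
  | .con k as, s, h => by
    rw [NS_subst1_con] at h
    cases h with
    | @con _ k' _ as' hle hl hl' hargs =>
      rw [List.length_map] at hl
      have hTeq : top k = top k' := NS_top_eq S top h1 h2 hle
      rw [NS_maxTy_con, NS_maxTy_con, NS_subst1_con, ← hTeq, List.map_map]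
      congr 1
      apply List.map_congr_left
      intro i hi
      rw [List.mem_range] at hi
      have hk'T : S.le k' (top k) := h2 k k' hle
      have hj : S.iota k' (top k) i < S.ar k' := S.iota_lt hk'T hi
      have hm : S.iota k k' (S.iota k' (top k) i) < S.ar k := S.iota_lt hle hj
      have hml : S.iota k k' (S.iota k' (top k) i) < as.length := by omega
      have harg := hargs (S.iota k' (top k) i) hj
      rw [List.getD_eq_getElem _ _ (by rw [List.length_map]; omega),
        List.getElem_map] at harg
      have hrec := NS_key S top h1 h2 α σ
        (as.getD (S.iota k k' (S.iota k' (top k) i)) (.param 0))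
        (as'.getD (S.iota k' (top k) i) (.param 0))
        (by rwa [List.getD_eq_getElem _ _ hml])
      have hcomp : S.iota k (top k) i = S.iota k k' (S.iota k' (top k) i) :=
        S.iota_comp hle hk'T hi
      simp only [Function.comp_apply]
      rw [hcomp]
      exact hrec
termination_by t s h => sizeOf t
decreasing_by exact NS_sizeOf_getD_lt as _ k

lemma NS_occurs_le {K : Type} (α : ℕ) (x : Ty K) {t : Ty K} (h : Occurs α t) :
    x.size ≤ (Ty.subst1 α x t).size := by
  induction h with
  | param => simp [NS_subst1_param]
  | @con k as u hu hocc ih =>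
    rw [NS_subst1_con, NS_size_con]
    have hmem : Ty.size (Ty.subst1 α x u) ∈ (as.map (Ty.subst1 α x)).map Ty.size := by
      simp only [List.mem_map]
      exact ⟨Ty.subst1 α x u, ⟨u, hu, rfl⟩, rfl⟩
    have := List.single_le_sum (fun y _ => Nat.zero_le y) _ hmem
    omega

lemma NS_occurs_lt {K : Type} (α : ℕ) (x : Ty K) {t : Ty K} (h : Occurs α t)
    (hne : t ≠ .param α) : x.size < (Ty.subst1 α x t).size := by
  cases h with
  | param => exact absurd rfl hne
  | @con k as u hu hocc =>
    have hle := NS_occurs_le α x hocc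
    rw [NS_subst1_con, NS_size_con]
    have hmem : Ty.size (Ty.subst1 α x u) ∈ (as.map (Ty.subst1 α x)).map Ty.size := by
      simp only [List.mem_map]
      exact ⟨Ty.subst1 α x u, ⟨u, hu, rfl⟩, rfl⟩
    have := List.single_le_sum (fun y _ => Nat.zero_le y) _ hmem
    omega


/-- an inequality τ[α] ≤ α, where τ strictly contains α, has no
solution if α occurs in Max(τ). -/
theorem no_solution_right {K : Type} (S : Sig K) (α : ℕ) (τ mτ : Ty K)
    (htop : ∀ k : K, ∃ k', S.le k k' ∧ ∀ k'', S.le k k'' → S.le k'' k')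
    (hstrict : ∀ σ : Ty K, σ.size < (Ty.subst1 α σ τ).size)
    (hmτ : IsMaxTy S τ mτ) (hα : Occurs α mτ) :
    ¬ ∃ σ : Ty K, SubTy S (Ty.subst1 α σ τ) σ := by
  rintro ⟨σ, h⟩
  choose top htop1 htop2 using htop
  have hspec := NS_maxTy_spec S top htop1 htop2 hmτ.1
  have ha : SubTy S mτ (maxTy S top τ) := hspec.2.2 ▸ hspec.2.1
  have hb : SubTy S (maxTy S top τ) mτ := hmτ.2 _ hspec.1
  have hmeq : mτ = maxTy S top τ := NS_subty_antisymm S ha hb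
  have hkey := NS_key S top htop1 htop2 α σ τ σ h
  rw [← hmeq] at hkey
  have hne : mτ ≠ .param α := by
    intro he
    have h' : SubTy S τ (.param α) := he ▸ hmτ.1
    cases h'
    have hs := hstrict (.param α)
    rw [NS_subst1_param, if_pos rfl] at hs
    omega
  have hlt := NS_occurs_lt α (maxTy S top σ) hα hne
  rw [← hkey] at hlt
  omega
end

section
/- The rewriting system consisting of the rules (Decomp), (Triv), (VarLeft), (VarRight) for simplifying subtype inequality systems terminates in at most n steps, where n is the sum of the sizes of the left-hand sides of the inequalities, because each rule strictly decreases that sum. -/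
/-- An item of a system: a subtype inequality `τ ≤ τ'` or an equation `α = τ`. -/
inductive Item (K : Type) : Type
  | ineq : Ty K → Ty K → Item K
  | eq : ℕ → Ty K → Item K

variable {K : Type}

/-- Substituting `σ` for the parameter `α` throughout an item. -/
def Item.substI (α : ℕ) (σ : Ty K) : Item K → Item K
  | .ineq l r => .ineq (Ty.subst1 α σ l) (Ty.subst1 α σ r)
  | .eq β τ => .eq β (Ty.subst1 α σ τ)

/-- `α` occurs in the left-hand side of an inequality item. -/
def Item.occLeft (α : ℕ) : Item K → Prop
  | .ineq l _ => Occurs α l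
  | .eq _ _ => False

/-- The simplification rules (Decomp), (Triv), (VarLeft), (VarRight) on systems
(finite multisets, represented as lists) of inequalities and equations. -/
inductive StepS (S : Sig K) : List (Item K) → List (Item K) → Prop
  | decomp {E1 E2 : List (Item K)} {k k' : K} {as as' : List (Ty K)} :
      S.le k k' → as.length = S.ar k → as'.length = S.ar k' →
      StepS S (E1 ++ [.ineq (.con k as) (.con k' as')] ++ E2)
        (E1 ++ ((List.range (S.ar k')).map
            (fun i => Item.ineq (as.getD (S.iota k k' i) (.param 0))
              (as'.getD i (.param 0)))) ++ E2)
  | triv {E1 E2 : List (Item K)} {α : ℕ} :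
      StepS S (E1 ++ [.ineq (.param α) (.param α)] ++ E2) (E1 ++ E2)
  | varLeft {E1 E2 : List (Item K)} {α : ℕ} {τ : Ty K} :
      τ ≠ .param α → ¬ Occurs α τ →
      (∀ it ∈ E1 ++ E2, ¬ it.occLeft α) →
      StepS S (E1 ++ [.ineq (.param α) τ] ++ E2)
        (.eq α τ :: (E1 ++ E2).map (Item.substI α τ))
  | varRight {E1 E2 : List (Item K)} {α : ℕ} {τ m : Ty K} :
      (∀ n, τ ≠ .param n) →
      (∀ it ∈ E1 ++ E2, ¬ it.occLeft α) →
      IsMaxTy S τ m → ¬ Occurs α m →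
      StepS S (E1 ++ [.ineq τ (.param α)] ++ E2)
        (.eq α m :: (E1 ++ E2).map (Item.substI α m))

/-- The sum of the sizes of the left-hand sides of the inequalities of a system. -/
def measureS (E : List (Item K)) : ℕ :=
  (E.map (fun it => match it with | .ineq l _ => l.size | .eq _ _ => 0)).sum

lemma subst1_of_not_occurs {K : Type} (α : ℕ) (σ : Ty K) :
    ∀ t : Ty K, ¬ Occurs α t → Ty.subst1 α σ t = t := by
  intro t
  induction t using Ty.subst.induct with
  | case1 n =>
      intro h
      simp only [Ty.subst1, Ty.subst]
      have : n ≠ α := fun e => h (e ▸ Occurs.param)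
      simp [this]
  | case2 k as ih =>
      intro h
      simp only [Ty.subst1, Ty.subst] at *
      congr 1
      have : (as.attach.map (fun a => a.1.subst (fun n => if n = α then σ else Ty.param n)))
          = as.attach.map (fun a => a.1) := by
        apply List.map_congr_left
        intro a _
        exact ih a (fun hc => h (Occurs.con a.2 hc))
      rw [this]
      simp

lemma size_con {K : Type} (k : K) (as : List (Ty K)) :
    Ty.size (.con k as) = 1 + (as.map Ty.size).sum := by
  rw [Ty.size]
  congr 1
  simp [List.attach_map_val]

lemma size_pos {K : Type} (t : Ty K) : 1 ≤ t.size := by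
  cases t with
  | param n => simp [Ty.size]
  | con k as => rw [size_con]; omega

def leftSize {K : Type} : Item K → ℕ
  | .ineq l _ => l.size
  | .eq _ _ => 0

lemma measureS_eq {K : Type} (E : List (Item K)) : measureS E = (E.map leftSize).sum := by
  unfold measureS
  congr 1

lemma measureS_append {K : Type} (E1 E2 : List (Item K)) :
    measureS (E1 ++ E2) = measureS E1 + measureS E2 := by
  simp [measureS_eq]

lemma measureS_cons {K : Type} (it : Item K) (E : List (Item K)) :
    measureS (it :: E) = leftSize it + measureS E := by
  simp [measureS_eq]

lemma measureS_map_substI {K : Type} (α : ℕ) (σ : Ty K) (E : List (Item K))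
    (h : ∀ it ∈ E, ¬ it.occLeft α) :
    measureS (E.map (Item.substI α σ)) = measureS E := by
  induction E with
  | nil => rfl
  | cons it E ih =>
      have h1 := h it (by simp)
      have h2 : measureS (E.map (Item.substI α σ)) = measureS E :=
        ih (fun it' hit' => h it' (by simp [hit']))
      cases it with
      | ineq l r =>
          simp only [Item.occLeft] at h1
          simp only [List.map_cons, measureS_cons, h2, Item.substI, leftSize,
            subst1_of_not_occurs α σ l h1]
      | eq β τ =>
          simp only [List.map_cons, measureS_cons, h2, Item.substI, leftSize]

lemma getD_sum_le {K : Type} (as : List (Ty K)) (n : ℕ) (ι : ℕ → ℕ)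
    (hlt : ∀ i < n, ι i < as.length)
    (hinj : ∀ i j, i < n → j < n → ι i = ι j → i = j) :
    ((List.range n).map (fun i => (as.getD (ι i) (.param 0)).size)).sum
      ≤ (as.map Ty.size).sum := by
  have key : ((List.range n).map (fun i => (as.getD (ι i) (.param 0)).size)).sum
      = ∑ i ∈ Finset.range n, (as.getD (ι i) (.param 0)).size := rfl
  rw [key]
  have himg : ∑ i ∈ Finset.range n, (as.getD (ι i) (.param 0)).size
      = ∑ j ∈ (Finset.range n).image ι, (as.getD j (.param 0)).size := by
    rw [Finset.sum_image]
    intro i hi j hj hij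
    exact hinj i j (Finset.mem_range.1 hi) (Finset.mem_range.1 hj) hij
  rw [himg]
  have hsub : (Finset.range n).image ι ⊆ Finset.range as.length := by
    intro j hj
    obtain ⟨i, hi, rfl⟩ := Finset.mem_image.1 hj
    exact Finset.mem_range.2 (hlt i (Finset.mem_range.1 hi))
  calc ∑ j ∈ (Finset.range n).image ι, (as.getD j (.param 0)).size
      ≤ ∑ j ∈ Finset.range as.length, (as.getD j (.param 0)).size :=
        Finset.sum_le_sum_of_subset hsub
    _ = (as.map Ty.size).sum := by
        have e1 : ∑ j ∈ Finset.range as.length, (as.getD j (.param 0)).size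
            = ((List.range as.length).map (fun j => (as.getD j (.param 0)).size)).sum := rfl
        rw [e1]
        congr 1
        apply List.ext_getElem
        · simp
        · intro i h1 h2
          simp only [List.getElem_map, List.getElem_range]
          rw [List.getD_eq_getElem]

/-- each simplification rule strictly decreases the sum of the
sizes of left-hand sides of inequalities; consequently the rewriting system
terminates in at most that many steps. -/
theorem simplification_terminates (S : Sig K) :
    (∀ E E2v : List (Item K), StepS S E E2v → measureS E2v < measureS E) ∧
    (∀ (seq : ℕ → List (Item K)) (n : ℕ),
      (∀ i < n, StepS S (seq i) (seq (i + 1))) → n ≤ measureS (seq 0)) := by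
  have dec : ∀ E E2v : List (Item K), StepS S E E2v → measureS E2v < measureS E := by
    intro E E2v hst
    cases hst with
    | @decomp E1 E2 k k' as as' hle hlen hlen' =>
        simp only [measureS_append]
        have hb := getD_sum_le as (S.ar k') (S.iota k k')
          (fun i hi => by rw [hlen]; exact S.iota_lt hle hi)
          (fun i j hi hj hij => S.iota_inj hle hi hj hij)
        have hnew : measureS ((List.range (S.ar k')).map
            (fun i => Item.ineq (as.getD (S.iota k k' i) (.param 0))
              (as'.getD i (.param 0))))
            = ((List.range (S.ar k')).map (fun i => (as.getD (S.iota k k' i) (.param 0)).size)).sum := by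
          rw [measureS_eq, List.map_map]
          rfl
        have hold : measureS ([Item.ineq (Ty.con k as) (Ty.con k' as')] : List (Item K))
            = 1 + (as.map Ty.size).sum := by
          simp [measureS_eq, leftSize, size_con]
        rw [hnew, hold]
        omega
    | @triv E1 E2 α =>
        simp only [measureS_append]
        have : measureS ([Item.ineq (Ty.param α) (Ty.param α)] : List (Item K)) = 1 := by
          simp [measureS_eq, leftSize, Ty.size]
        omega
    | @varLeft E1 E2 α τ hne hocc hL =>
        rw [measureS_cons, measureS_map_substI α τ _ hL]
        simp only [measureS_append, leftSize]
        have : measureS ([Item.ineq (Ty.param α) τ] : List (Item K)) = 1 := by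
          simp [measureS_eq, leftSize, Ty.size]
        omega
    | @varRight E1 E2 α τ m hnp hL hmax hocc =>
        rw [measureS_cons, measureS_map_substI α m _ hL]
        simp only [measureS_append, leftSize]
        have : measureS ([Item.ineq τ (Ty.param α)] : List (Item K)) = τ.size := by
          simp [measureS_eq, leftSize]
        have := size_pos τ
        omega
  refine ⟨dec, ?_⟩
  intro seq n hsteps
  have key : ∀ m, (∀ i < m, StepS S (seq i) (seq (i + 1))) →
      measureS (seq m) + m ≤ measureS (seq 0) := by
    intro m
    induction m with
    | zero => intro _; omega
    | succ m ih =>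
        intro h
        have h1 := dec _ _ (h m (by omega))
        have h2 := ih (fun i hi => h i (by omega))
        omega
  have := key n hsteps
  omega
end

section
/- The system of subtype inequalities generated by the deterministic type checking algorithm (rules Func', Atom', Head', with type variables in types of program variables frozen as constants) is acyclic and left-linear. -/
/-- Terms over function symbols `F` and program variables `V`. -/
inductive Tm (F V : Type) : Type
  | var : V → Tm F V
  | app : F → List (Tm F V) → Tm F V

variable {K F V P : Type}

/-- `α` occurs in a list of subtype constraints (pairs `(lhs, rhs)` meaning `lhs ≤ rhs`). -/
def OccursC (α : ℕ) (C : List (Ty K × Ty K)) : Prop :=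
  ∃ p ∈ C, Occurs α p.1 ∨ Occurs α p.2

/-- A flat type: `K(α₁,…,αₘ)` with distinct parameters. -/
def Flat (t : Ty K) : Prop :=
  ∃ (k : K) (ns : List ℕ), t = .con k (ns.map .param) ∧ ns.Nodup

/-- Constraint generation for terms by the deterministic rule (Func'):
`Gen S fdecl U t σ C` means the type checker assigns `t` the type `σ` and posts
the system `C` of subtype inequalities.  At each node the declared type scheme
of the symbol (with flat result type) is renamed apart by a fresh injective
renaming `ρ`, and the inequalities `σᵢ ≤ τᵢρ` are posted. -/
inductive Gen (S : Sig K) (fdecl : F → List (Ty K) × Ty K) (U : V → Ty K) :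
    Tm F V → Ty K → List (Ty K × Ty K) → Prop
  | var (x : V) : Gen S fdecl U (.var x) (U x) []
  | func {f : F} {ts : List (Tm F V)} (σs : List (Ty K))
      (Cs : List (List (Ty K × Ty K))) (ρ : ℕ → ℕ) :
      Function.Injective ρ →
      Flat (fdecl f).2 →
      ts.length = (fdecl f).1.length →
      σs.length = ts.length → Cs.length = ts.length →
      (∀ i, i < ts.length →
        Gen S fdecl U (ts.getD i (.app f [])) (σs.getD i (.param 0)) (Cs.getD i [])) →
      -- freshness of the renaming w.r.t. the subderivations
      (∀ n i, i < ts.length →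
        ¬ Occurs (ρ n) (σs.getD i (.param 0)) ∧ ¬ OccursC (ρ n) (Cs.getD i [])) →
      -- the subderivations are renamed apart from each other
      (∀ i j, i < ts.length → j < ts.length → i ≠ j → ∀ α,
        (Occurs α (σs.getD i (.param 0)) ∨ OccursC α (Cs.getD i [])) →
        ¬ (Occurs α (σs.getD j (.param 0)) ∨ OccursC α (Cs.getD j []))) →
      Gen S fdecl U (.app f ts) (Ty.subst (fun n => .param (ρ n)) (fdecl f).2)
        (Cs.flatten ++
          List.zip σs ((fdecl f).1.map (Ty.subst (fun n => .param (ρ n)))))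

/-- Constraint generation for an atom or clause head by rules (Atom')/(Head'):
the declared type scheme of the predicate is renamed apart and the inequalities
`σᵢ ≤ τᵢρ` are posted on top of the constraints of the argument terms. -/
inductive GenAtom (S : Sig K) (fdecl : F → List (Ty K) × Ty K)
    (pdecl : P → List (Ty K)) (U : V → Ty K) :
    P → List (Tm F V) → List (Ty K × Ty K) → Prop
  | mk {p : P} {ts : List (Tm F V)} (t₀ : Tm F V) (σs : List (Ty K))
      (Cs : List (List (Ty K × Ty K))) (ρ : ℕ → ℕ) :
      Function.Injective ρ →
      ts.length = (pdecl p).length →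
      σs.length = ts.length → Cs.length = ts.length →
      (∀ i, i < ts.length →
        Gen S fdecl U (ts.getD i t₀) (σs.getD i (.param 0)) (Cs.getD i [])) →
      (∀ n i, i < ts.length →
        ¬ Occurs (ρ n) (σs.getD i (.param 0)) ∧ ¬ OccursC (ρ n) (Cs.getD i [])) →
      (∀ i j, i < ts.length → j < ts.length → i ≠ j → ∀ α,
        (Occurs α (σs.getD i (.param 0)) ∨ OccursC α (Cs.getD i [])) →
        ¬ (Occurs α (σs.getD j (.param 0)) ∨ OccursC α (Cs.getD j []))) →
      GenAtom S fdecl pdecl U p ts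
        (Cs.flatten ++ List.zip σs ((pdecl p).map (Ty.subst (fun n => .param (ρ n)))))

/-- Number of occurrences of parameter `α` in a type. -/
def Ty.occCount (α : ℕ) : Ty K → ℕ
  | .param n => if n = α then 1 else 0
  | .con _ as => (as.attach.map (fun a => a.1.occCount α)).sum
decreasing_by simp_wf; have := List.sizeOf_lt_of_mem a.2; omega

/-- Left-linearity: each type variable occurs at most once in the left-hand
sides of the system. -/
def LeftLinearC (C : List (Ty K × Ty K)) : Prop :=
  ∀ α, (C.map (fun p => p.1.occCount α)).sum ≤ 1

/-- Acyclicity: some ranking of type variables increases strictly from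
left-hand sides to right-hand sides. -/
def AcyclicC (C : List (Ty K × Ty K)) : Prop :=
  ∃ r : ℕ → ℕ, ∀ p ∈ C, ∀ α β, Occurs α p.1 → Occurs β p.2 → r α < r β


section Helpers

theorem ty_ind {motive : Ty K → Prop} (hp : ∀ n, motive (.param n))
    (hc : ∀ k as, (∀ t ∈ as, motive t) → motive (.con k as)) : ∀ t, motive t := by
  have H : ∀ N, ∀ t : Ty K, sizeOf t ≤ N → motive t := by
    intro N
    induction N with
    | zero => intro t ht; cases t <;> simp at ht
    | succ N ih =>
      intro t ht
      cases t with
      | param n => exact hp n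
      | con k as =>
        refine hc k as fun s hs => ih s ?_
        have := List.sizeOf_lt_of_mem hs
        simp at ht; omega
  exact fun t => H (sizeOf t) t le_rfl

theorem subst_param (θ : ℕ → Ty K) (n : ℕ) : Ty.subst θ (.param n) = θ n := by rw [Ty.subst]

theorem subst_con (θ : ℕ → Ty K) (k : K) (as : List (Ty K)) :
    Ty.subst θ (.con k as) = .con k (as.map (Ty.subst θ)) := by
  rw [Ty.subst]; congr 1; exact List.attach_map_val

theorem occCount_param (α n : ℕ) : Ty.occCount α (Ty.param n : Ty K) = if n = α then 1 else 0 := by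
  rw [Ty.occCount]

theorem occCount_con (α : ℕ) (k : K) (as : List (Ty K)) :
    Ty.occCount α (.con k as) = (as.map (Ty.occCount α)).sum := by
  rw [Ty.occCount]; congr 1; exact List.attach_map_val

theorem occurs_param_iff {α n : ℕ} : Occurs α (Ty.param n : Ty K) ↔ α = n :=
  ⟨fun h => by cases h; rfl, fun h => h ▸ Occurs.param⟩

theorem occurs_con_iff {α : ℕ} {k : K} {as : List (Ty K)} :
    Occurs α (.con k as) ↔ ∃ t ∈ as, Occurs α t :=
  ⟨fun h => by cases h with | con ht ho => exact ⟨_, ht, ho⟩, fun ⟨t, ht, ho⟩ => .con ht ho⟩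

theorem occurs_iff_count {α : ℕ} : ∀ t : Ty K, Occurs α t ↔ 0 < Ty.occCount α t := by
  refine ty_ind ?_ ?_
  · intro n
    rw [occCount_param, occurs_param_iff]
    rcases eq_or_ne n α with rfl | h
    · simp
    · simp [h, Ne.symm h]
  · intro k as ih
    rw [occCount_con, occurs_con_iff]
    constructor
    · rintro ⟨t, ht, ho⟩
      have h1 : 0 < Ty.occCount α t := (ih t ht).1 ho
      have h2 : Ty.occCount α t ≤ (as.map (Ty.occCount α)).sum :=
        List.single_le_sum (fun x _ => Nat.zero_le x) _ (List.mem_map_of_mem ht)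
      omega
    · intro h
      by_contra hno
      push_neg at hno
      have : (as.map (Ty.occCount α)).sum = 0 := by
        refine List.sum_eq_zero ?_
        rintro x hx
        rcases List.mem_map.1 hx with ⟨t, ht, rfl⟩
        have h2 := hno t ht
        rw [ih t ht] at h2
        omega
      omega

theorem not_occurs_count {α : ℕ} {t : Ty K} (h : ¬ Occurs α t) : Ty.occCount α t = 0 := by
  have := occurs_iff_count (α := α) t
  by_contra hc
  exact h (this.2 (by omega))

theorem occurs_subst {β : ℕ} {θ : ℕ → Ty K} :
    ∀ t : Ty K, Occurs β (t.subst θ) → ∃ n, Occurs n t ∧ Occurs β (θ n) := by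
  refine ty_ind ?_ ?_
  · intro n h; rw [subst_param] at h; exact ⟨n, Occurs.param, h⟩
  · intro k as ih h
    rw [subst_con] at h
    rcases occurs_con_iff.1 h with ⟨s, hs, ho⟩
    rcases List.mem_map.1 hs with ⟨a, ha, rfl⟩
    rcases ih a ha ho with ⟨m, h1, h2⟩
    exact ⟨m, occurs_con_iff.2 ⟨a, ha, h1⟩, h2⟩

theorem sum_map_getD {A : Type} (f : A → ℕ) (d : A) :
    ∀ l : List A, (l.map f).sum = ∑ i ∈ Finset.range l.length, f (l.getD i d)
  | [] => by simp
  | a :: l => by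
    rw [List.map_cons, List.sum_cons, List.length_cons, Finset.sum_range_succ']
    simp only [List.getD_cons_succ, List.getD_cons_zero]
    rw [sum_map_getD f d l]
    omega

theorem nodup_if_sum (α : ℕ) : ∀ l : List ℕ, l.Nodup →
    (l.map fun m => if m = α then 1 else 0).sum ≤ 1
  | [], _ => by simp
  | a :: l, h => by
    rw [List.map_cons, List.sum_cons]
    rcases List.nodup_cons.1 h with ⟨ha, hl⟩
    by_cases hc : a = α
    · subst hc
      have hz : (l.map fun m => if m = a then 1 else 0).sum = 0 := by
        refine List.sum_eq_zero ?_
        rintro x hx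
        rcases List.mem_map.1 hx with ⟨m, hm, rfl⟩
        simp [show m ≠ a from fun e => ha (e ▸ hm)]
      simp [hz]
    · have := nodup_if_sum α l hl
      simp only [if_neg hc]
      omega

theorem notOccursC_sum {α : ℕ} {c : List (Ty K × Ty K)} (h : ¬ OccursC α c) :
    (c.map fun p => p.1.occCount α).sum = 0 := by
  refine List.sum_eq_zero ?_
  rintro x hx
  rcases List.mem_map.1 hx with ⟨p, hp, rfl⟩
  exact not_occurs_count fun ho => h ⟨p, hp, Or.inl ho⟩

/-- Strengthened invariant for the induction. -/
def GoodSys (σ : Ty K) (C : List (Ty K × Ty K)) : Prop :=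
  (∀ α, Ty.occCount α σ + (C.map fun p => p.1.occCount α).sum ≤ 1) ∧
  ∃ (r : ℕ → ℕ) (N : ℕ), (∀ p ∈ C, ∀ α β, Occurs α p.1 → Occurs β p.2 → r α < r β) ∧
    ∀ α : ℕ, (Occurs α σ ∨ OccursC α C) → r α < N

theorem core {n : ℕ} {σs : List (Ty K)} {Cs : List (List (Ty K × Ty K))} {τs : List (Ty K)}
    {ρ : ℕ → ℕ}
    (hσl : σs.length = n) (hCl : Cs.length = n) (hτl : τs.length = n)
    (hgood : ∀ i, i < n → GoodSys (σs.getD i (.param 0)) (Cs.getD i []))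
    (hfresh : ∀ m i, i < n → ¬Occurs (ρ m) (σs.getD i (.param 0)) ∧
      ¬OccursC (ρ m) (Cs.getD i []))
    (hdisj : ∀ i j, i < n → j < n → i ≠ j → ∀ α,
      (Occurs α (σs.getD i (.param 0)) ∨ OccursC α (Cs.getD i [])) →
      ¬(Occurs α (σs.getD j (.param 0)) ∨ OccursC α (Cs.getD j [])))
    (hτ : ∀ τ ∈ τs, ∀ β, Occurs β τ → ∃ m, β = ρ m) :
    (∀ α, ((Cs.flatten ++ σs.zip τs).map fun p => p.1.occCount α).sum ≤ 1) ∧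
    (∀ m, ((Cs.flatten ++ σs.zip τs).map fun p => p.1.occCount (ρ m)).sum = 0) ∧
    ∃ (r : ℕ → ℕ) (N : ℕ), (∀ p ∈ Cs.flatten ++ σs.zip τs, ∀ α β, Occurs α p.1 → Occurs β p.2 → r α < r β) ∧
      (∀ m, r (ρ m) < N) ∧ (∀ α, OccursC α (Cs.flatten ++ σs.zip τs) → r α < N) := by
  classical
  -- abbreviation for occurrence in branch i
  set br : ℕ → ℕ → Prop := fun α i =>
    Occurs α (σs.getD i (.param 0)) ∨ OccursC α (Cs.getD i []) with hbr
  -- sum decomposition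
  have sumEq : ∀ α, ((Cs.flatten ++ σs.zip τs).map fun p => p.1.occCount α).sum
      = ∑ i ∈ Finset.range n,
        (Ty.occCount α (σs.getD i (.param 0)) +
          ((Cs.getD i []).map fun p => p.1.occCount α).sum) := by
    intro α
    rw [List.map_append, List.sum_append]
    have h1 : ((Cs.flatten).map fun p => p.1.occCount α).sum
        = ∑ i ∈ Finset.range n, ((Cs.getD i []).map fun p => p.1.occCount α).sum := by
      rw [List.map_flatten, List.sum_flatten, List.map_map]
      rw [show (List.sum ∘ List.map fun p => p.1.occCount α)
          = fun c => ((c.map fun p : Ty K × Ty K => p.1.occCount α).sum) from rfl]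
      rw [sum_map_getD _ ([] : List (Ty K × Ty K)) Cs, hCl]
    have h2 : (((σs.zip τs)).map fun p => p.1.occCount α).sum
        = ∑ i ∈ Finset.range n, Ty.occCount α (σs.getD i (.param 0)) := by
      have he : ((σs.zip τs)).map (fun p => p.1.occCount α)
          = σs.map (fun s => s.occCount α) := by
        have : ((σs.zip τs)).map (fun p => p.1.occCount α)
            = (((σs.zip τs)).map Prod.fst).map (fun s => s.occCount α) := by
          rw [List.map_map]; rfl
        rw [this, List.map_fst_zip (l₁ := σs) (l₂ := τs) (by omega)]
      rw [he, sum_map_getD _ (Ty.param 0) σs, hσl]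
    rw [h1, h2, ← Finset.sum_add_distrib]
    exact Finset.sum_congr rfl fun i _ => by omega
  have hzero : ∀ α i, i < n → ¬ br α i →
      Ty.occCount α (σs.getD i (.param 0)) +
        ((Cs.getD i []).map fun p => p.1.occCount α).sum = 0 := by
    intro α i hi hb
    have h1 : ¬ Occurs α (σs.getD i (.param 0)) := fun h => hb (Or.inl h)
    have h2 : ¬ OccursC α (Cs.getD i []) := fun h => hb (Or.inr h)
    rw [not_occurs_count h1, notOccursC_sum h2]
  have memSplit : ∀ p ∈ Cs.flatten ++ σs.zip τs,
      (∃ i, i < n ∧ p ∈ Cs.getD i []) ∨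
      (∃ i, i < n ∧ p = (σs.getD i (.param 0), τs.getD i (.param 0))) := by
    intro p hp
    rcases List.mem_append.1 hp with hp | hp
    · left
      rcases List.mem_flatten.1 hp with ⟨c, hc, hpc⟩
      rcases List.mem_iff_getElem.1 hc with ⟨i, hi, rfl⟩
      refine ⟨i, by omega, ?_⟩
      rwa [List.getD_eq_getElem _ _ hi]
    · right
      rcases List.mem_iff_getElem.1 hp with ⟨i, hi, hpe⟩
      rw [List.length_zip] at hi
      have hi1 : i < σs.length := by omega
      have hi2 : i < τs.length := by omega
      refine ⟨i, by omega, ?_⟩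
      rw [← hpe, List.getElem_zip, List.getD_eq_getElem _ _ hi1, List.getD_eq_getElem _ _ hi2]
  refine ⟨?_, ?_, ?_⟩
  · -- left-linearity bound
    intro α
    rw [sumEq]
    by_cases hex : ∃ i, i < n ∧ br α i
    · obtain ⟨i, hi, hbi⟩ := hex
      rw [Finset.sum_eq_single_of_mem i (Finset.mem_range.2 hi)
        (fun j hj hne => hzero α j (Finset.mem_range.1 hj)
          (hdisj i j hi (Finset.mem_range.1 hj) (fun e => hne (e ▸ rfl)) α hbi))]
      have := (hgood i hi).1 α
      omega
    · push_neg at hex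
      rw [Finset.sum_eq_zero (fun i hi => hzero α i (Finset.mem_range.1 hi)
        (hex i (Finset.mem_range.1 hi)))]
      omega
  · -- freshness: ρ-images never occur in left-hand sides
    intro m
    rw [sumEq]
    refine Finset.sum_eq_zero fun i hi => ?_
    refine hzero (ρ m) i (Finset.mem_range.1 hi) ?_
    rw [hbr]
    rcases hfresh m i (Finset.mem_range.1 hi) with ⟨h1, h2⟩
    rintro (h | h)
    · exact h1 h
    · exact h2 h
  · -- acyclicity
    have h2 : ∀ i, i < n → ∃ (r : ℕ → ℕ) (N : ℕ),
        (∀ p ∈ Cs.getD i [], ∀ α β, Occurs α p.1 → Occurs β p.2 → r α < r β) ∧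
        ∀ α : ℕ, (Occurs α (σs.getD i (.param 0)) ∨ OccursC α (Cs.getD i [])) → r α < N :=
      fun i hi => (hgood i hi).2
    choose! r N hr hN using h2
    set M := (Finset.range n).sup N with hM
    set R : ℕ → ℕ := fun α => if h : ∃ i, i < n ∧ br α i then r h.choose α else M with hR
    have hRbr : ∀ i, i < n → ∀ α, br α i → R α = r i α := by
      intro i hi α hb
      have hex : ∃ j, j < n ∧ br α j := ⟨i, hi, hb⟩
      rw [hR]
      simp only
      rw [dif_pos hex]
      obtain ⟨hj1, hj2⟩ := hex.choose_spec
      rcases eq_or_ne hex.choose i with he | hne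
      · rw [he]
      · exact absurd hb (hdisj hex.choose i hj1 hi hne α hj2)
    have hRρ : ∀ m, R (ρ m) = M := by
      intro m
      rw [hR]
      simp only
      rw [dif_neg]
      rintro ⟨i, hi, hb⟩
      rcases hfresh m i hi with ⟨h1', h2'⟩
      rcases hb with hb | hb
      · exact h1' hb
      · exact h2' hb
    have hNM : ∀ i, i < n → N i ≤ M := fun i hi => Finset.le_sup (Finset.mem_range.2 hi)
    refine ⟨R, M + 1, ?_, fun m => by rw [hRρ]; omega, ?_⟩
    · intro p hp α β hα hβ
      rcases memSplit p hp with ⟨i, hi, hpc⟩ | ⟨i, hi, hpe⟩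
      · have hbα : br α i := Or.inr ⟨p, hpc, Or.inl hα⟩
        have hbβ : br β i := Or.inr ⟨p, hpc, Or.inr hβ⟩
        rw [hRbr i hi α hbα, hRbr i hi β hbβ]
        exact hr i hi p hpc α β hα hβ
      · rw [hpe] at hα hβ
        have hbα : br α i := Or.inl hα
        rw [hRbr i hi α hbα]
        have hmem : τs.getD i (.param 0) ∈ τs := by
          rw [List.getD_eq_getElem _ _ (by omega)]
          exact List.getElem_mem _
        obtain ⟨m, rfl⟩ := hτ _ hmem β hβ
        rw [hRρ m]
        have h1' := hN i hi α (Or.inl hα)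
        have h2' := hNM i hi
        omega
    · rintro α ⟨p, hp, hocc⟩
      rcases memSplit p hp with ⟨i, hi, hpc⟩ | ⟨i, hi, hpe⟩
      · have hb : br α i := Or.inr ⟨p, hpc, hocc⟩
        rw [hRbr i hi α hb]
        have := hN i hi α hb
        have := hNM i hi
        omega
      · rw [hpe] at hocc
        rcases hocc with hocc | hocc
        · have hb : br α i := Or.inl hocc
          rw [hRbr i hi α hb]
          have := hN i hi α (Or.inl hocc)
          have := hNM i hi
          omega
        · have hmem : τs.getD i (.param 0) ∈ τs := by
            rw [List.getD_eq_getElem _ _ (by omega)]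
            exact List.getElem_mem _
          obtain ⟨m, rfl⟩ := hτ _ hmem α hocc
          rw [hRρ m]
          omega

end Helpers

/-- the system of subtype inequalities generated by the
deterministic type checker (rules Func', Atom', Head'), with the type variables
of the types of program variables frozen as constants (here: those types are
ground), is acyclic and left-linear. -/
theorem generated_system_acyclic_leftLinear (S : Sig K)
    (fdecl : F → List (Ty K) × Ty K) (pdecl : P → List (Ty K)) (U : V → Ty K)
    (hU : ∀ (x : V) (α : ℕ), ¬ Occurs α (U x)) :
    (∀ (t : Tm F V) (σ : Ty K) (C : List (Ty K × Ty K)),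
      Gen S fdecl U t σ C → LeftLinearC C ∧ AcyclicC C) ∧
    (∀ (p : P) (ts : List (Tm F V)) (C : List (Ty K × Ty K)),
      GenAtom S fdecl pdecl U p ts C → LeftLinearC C ∧ AcyclicC C) := by
  classical
  have main : ∀ (t : Tm F V) (σ : Ty K) (C : List (Ty K × Ty K)),
      Gen S fdecl U t σ C → GoodSys σ C := by
    intro t σ C hgen
    induction hgen with
    | var x =>
      refine ⟨fun α => by simp [not_occurs_count (hU x α)], fun _ => 0, 0, by simp, ?_⟩
      rintro α (h | ⟨p, hp, _⟩)
      · exact absurd h (hU x α)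
      · simp at hp
    | func σs Cs ρ hinj hflat hlen hσl hCl hsub hfresh hdisj ih =>
      rename_i f ts
      obtain ⟨k, ns, heq, hnodup⟩ := hflat
      set θ : ℕ → Ty K := fun n => Ty.param (ρ n) with hθ
      have hτlen : ((fdecl f).1.map (Ty.subst θ)).length = ts.length := by
        rw [List.length_map]; omega
      have hτ : ∀ τ ∈ (fdecl f).1.map (Ty.subst θ), ∀ β, Occurs β τ → ∃ m, β = ρ m := by
        intro τ hτm β hocc
        rcases List.mem_map.1 hτm with ⟨τ₀, _, rfl⟩
        rcases occurs_subst τ₀ hocc with ⟨m, _, h2⟩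
        rw [hθ] at h2
        exact ⟨m, occurs_param_iff.1 h2⟩
      obtain ⟨c1, c2, c3⟩ := core hσl hCl hτlen (fun i hi => ih i hi) hfresh hdisj hτ
      have hσ : Ty.subst θ (fdecl f).2 = .con k (ns.map fun m => Ty.param (ρ m)) := by
        rw [heq, subst_con, List.map_map]
        congr 1
        refine List.map_congr_left fun m _ => ?_
        simp only [hθ, Function.comp_apply, subst_param]
      have hoccσ : ∀ α, Occurs α (Ty.subst θ (fdecl f).2) ↔ ∃ m ∈ ns, α = ρ m := by
        intro α
        rw [hσ, occurs_con_iff]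
        constructor
        · rintro ⟨s, hs, ho⟩
          rcases List.mem_map.1 hs with ⟨m, hm, rfl⟩
          exact ⟨m, hm, occurs_param_iff.1 ho⟩
        · rintro ⟨m, hm, rfl⟩
          exact ⟨_, List.mem_map_of_mem hm, occurs_param_iff.2 rfl⟩
      constructor
      · intro α
        by_cases h : Occurs α (Ty.subst θ (fdecl f).2)
        · obtain ⟨m, hm, rfl⟩ := (hoccσ α).1 h
          rw [c2 m]
          have hcnt : Ty.occCount (ρ m) (Ty.subst θ (fdecl f).2) ≤ 1 := by
            rw [hσ, occCount_con, List.map_map]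
            have he2 : (Ty.occCount (ρ m) ∘ fun m' => (Ty.param (ρ m') : Ty K))
                = (fun x => if x = ρ m then 1 else 0) ∘ ρ :=
              funext fun m' => by simp [Function.comp, occCount_param]
            rw [he2, ← List.map_map]
            exact nodup_if_sum _ _ (hnodup.map hinj)
          omega
        · rw [not_occurs_count h]
          have := c1 α
          omega
      · obtain ⟨r, N, hr1, hr2, hr3⟩ := c3
        refine ⟨r, N, hr1, ?_⟩
        rintro α (h | h)
        · obtain ⟨m, _, rfl⟩ := (hoccσ α).1 h
          exact hr2 m
        · exact hr3 α h
  refine ⟨fun t σ C hgen => ?_, fun p ts C hga => ?_⟩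
  · obtain ⟨h1, r, N, h2, _⟩ := main t σ C hgen
    exact ⟨fun α => le_trans (Nat.le_add_left _ _) (h1 α), ⟨r, h2⟩⟩
  · cases hga with
    | mk t₀ σs Cs ρ hinj hlen hσl hCl hsub hfresh hdisj =>
      have hτlen : ((pdecl p).map (Ty.subst fun n => Ty.param (ρ n))).length = ts.length := by
        rw [List.length_map]; omega
      have hτ : ∀ τ ∈ (pdecl p).map (Ty.subst fun n => Ty.param (ρ n)),
          ∀ β, Occurs β τ → ∃ m, β = ρ m := by
        intro τ hτm β hocc
        rcases List.mem_map.1 hτm with ⟨τ₀, _, rfl⟩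
        rcases occurs_subst τ₀ hocc with ⟨m, _, h2⟩
        exact ⟨m, occurs_param_iff.1 h2⟩
      obtain ⟨c1, c2, c3⟩ := core hσl hCl hτlen
        (fun i hi => main _ _ _ (hsub i hi)) hfresh hdisj hτ
      obtain ⟨r, N, hr1, _, _⟩ := c3
      exact ⟨c1, r, hr1⟩
end
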